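/- Suppose multiplication by n! is injective in the commutative group S. If A : G^n → S is a symmetric n-additive function whose diagonalization A* is identically zero, then A is identically zero. -/

import Mathlib

/-- `A` is additive in each of its `n` variables. -/
def NAdditive {G S : Type*} [AddCommSemigroup G] [AddCommGroup S] {n : ℕ}
    (A : (Fin n → G) → S) : Prop :=
  ∀ (i : Fin n) (x : Fin n → G) (u v : G),
    A (Function.update x i (u + v)) = A (Function.update x i u) + A (Function.update x i v)

/-- `A` is symmetric. -/
def IsSymm' {G S : Type*} {n : ℕ} (A : (Fin n → G) → S) : Prop :=
  ∀ (σ : Equiv.Perm (Fin n)) (x : Fin n → G), A (x ∘ σ) = A x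

section Adjoin

variable {G : Type*} [AddCommSemigroup G]

/-- `G` with a zero adjoined, as an additive commutative monoid. -/
abbrev AdjZero (G : Type*) [AddCommSemigroup G] : Type _ :=
  Additive (WithOne (Multiplicative G))

/-- The embedding of `G` into `AdjZero G`. -/
def adj (g : G) : AdjZero G :=
  Additive.ofMul ((Multiplicative.ofAdd g : Multiplicative G) : WithOne (Multiplicative G))

theorem adj_add (a b : G) : adj (a + b) = adj a + adj b := rfl

theorem adj_ne_zero (g : G) : adj g ≠ 0 :=
  fun h => WithOne.coe_ne_one (congrArg Additive.toMul h)

/-- Extract the element of `G` from a nonzero element of `AdjZero G`. -/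
noncomputable def unadj (a : AdjZero G) (h : a ≠ 0) : G :=
  Multiplicative.toAdd (WithOne.unone (x := Additive.toMul a)
    (fun h1 => h (Additive.toMul.injective h1)))

theorem unadj_adj (g : G) (h : adj g ≠ 0) : unadj (adj g) h = g := rfl

theorem unadj_congr {a b : AdjZero G} (hab : a = b) (ha : a ≠ 0) (hb : b ≠ 0) :
    unadj a ha = unadj b hb := by subst hab; rfl

theorem exists_adj {a : AdjZero G} (h : a ≠ 0) : ∃ g : G, adj g = a := by
  obtain ⟨x, hx⟩ := WithOne.ne_one_iff_exists.mp
    (fun h1 => h (Additive.toMul.injective h1))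
  exact ⟨Multiplicative.toAdd x, Additive.toMul.injective hx⟩

theorem adj_add_ne_zero {a b : AdjZero G} (ha : a ≠ 0) (hb : b ≠ 0) : a + b ≠ 0 := by
  obtain ⟨x, rfl⟩ := exists_adj ha
  obtain ⟨y, rfl⟩ := exists_adj hb
  rw [← adj_add]
  exact adj_ne_zero _

end Adjoin

open Finset in
theorem stmt2_monoid {G S : Type*} [AddCommMonoid G] [AddCommGroup S] {n : ℕ}
    (hinj : Function.Injective (fun s : S => n.factorial • s))
    (A : (Fin n → G) → S) (hadd : NAdditive A) (hsym : IsSymm' A)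
    (hdiag : ∀ x : G, A (fun _ => x) = 0) :
    ∀ v : Fin n → G, A v = 0 := by
  classical
  have hzero : ∀ (x : Fin n → G) (i : Fin n), A (Function.update x i 0) = 0 := by
    intro x i
    have h := hadd i x 0 0
    rw [add_zero] at h
    exact (left_eq_add.mp h)
  have hsmul : ∀ (c : ℕ) (x : Fin n → G) (i : Fin n) (u : G),
      A (Function.update x i (c • u)) = c • A (Function.update x i u) := by
    intro c
    induction c with
    | zero => intro x i u; simpa using hzero x i
    | succ c ih =>
      intro x i u
      rw [succ_nsmul, hadd i x, ih, succ_nsmul]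
  let M : MultilinearMap ℕ (fun _ : Fin n => G) S :=
    { toFun := A
      map_update_add' := fun m i u v => by convert hadd i m u v
      map_update_smul' := fun m i c u => by convert hsmul c m i u }
  have hM : ∀ y : Fin n → G, M y = A y := fun _ => rfl
  intro v
  have key : ((n.factorial : ℤ) • A v) = (0 : S) := by
    have h1 : (0 : S) =
        ∑ T ∈ (univ : Finset (Fin n)).powerset,
          ((-1 : ℤ) ^ (n - T.card)) • A (fun _ => ∑ j ∈ T, v j) := by
      simp [hdiag]
    rw [eq_comm, h1]
    have h2 : ∀ T : Finset (Fin n),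
        A (fun _ : Fin n => ∑ j ∈ T, v j)
          = ∑ r ∈ Fintype.piFinset (fun _ : Fin n => T), A (fun i => v (r i)) := by
      intro T
      rw [← hM]
      rw [M.map_sum_finset (g := fun _ j => v j) (A := fun _ => T)]
      simp only [hM]
    calc
      ∑ T ∈ (univ : Finset (Fin n)).powerset,
          ((-1 : ℤ) ^ (n - T.card)) • A (fun _ => ∑ j ∈ T, v j)
        = ∑ T ∈ (univ : Finset (Fin n)).powerset, ∑ r ∈ (univ : Finset (Fin n → Fin n)),
            (if ∀ i, r i ∈ T then ((-1 : ℤ) ^ (n - T.card)) • A (fun i => v (r i)) else 0) := by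
          refine Finset.sum_congr rfl fun T _ => ?_
          rw [h2, Finset.smul_sum, ← Finset.sum_filter]
          congr 1
          ext r
          simp [Fintype.mem_piFinset]
      _ = ∑ r ∈ (univ : Finset (Fin n → Fin n)),
            (∑ T ∈ (univ : Finset (Fin n)).powerset,
              (if ∀ i, r i ∈ T then ((-1 : ℤ) ^ (n - T.card)) else 0)) • A (fun i => v (r i)) := by
          rw [Finset.sum_comm]
          refine Finset.sum_congr rfl fun r _ => ?_
          rw [Finset.sum_smul]
          refine Finset.sum_congr rfl fun T _ => ?_
          split <;> simp
      _ = ∑ r ∈ (univ : Finset (Fin n → Fin n)),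
            (if Function.Surjective r then (1 : ℤ) else 0) • A (fun i => v (r i)) := by
          refine Finset.sum_congr rfl fun r _ => ?_
          congr 1
          have hcompl : ∀ T : Finset (Fin n), n - T.card = Tᶜ.card := by
            intro T
            rw [Finset.card_compl, Fintype.card_fin]
          calc
            ∑ T ∈ (univ : Finset (Fin n)).powerset,
                (if ∀ i, r i ∈ T then ((-1 : ℤ) ^ (n - T.card)) else 0)
              = ∑ T ∈ (univ : Finset (Fin n)).powerset,
                (if Tᶜ ⊆ (Finset.image r univ)ᶜ then ((-1 : ℤ) ^ Tᶜ.card) else 0) := by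
                refine Finset.sum_congr rfl fun T _ => ?_
                rw [hcompl]
                congr 1
                rw [Finset.compl_subset_compl, Finset.image_subset_iff]
                simp
            _ = ∑ U ∈ (univ : Finset (Fin n)).powerset,
                (if U ⊆ (Finset.image r univ)ᶜ then ((-1 : ℤ) ^ U.card) else 0) := by
                refine Finset.sum_nbij' (fun T => Tᶜ) (fun U => Uᶜ) ?_ ?_ ?_ ?_ ?_ <;> simp
            _ = ∑ U ∈ ((Finset.image r univ)ᶜ).powerset, ((-1 : ℤ) ^ U.card) := by
                rw [← Finset.sum_filter]
                congr 1
                ext U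
                simp [Finset.mem_powerset]
            _ = if Function.Surjective r then (1 : ℤ) else 0 := by
                rw [Finset.sum_powerset_neg_one_pow_card]
                have hiff : Finset.image r univ = univ ↔ Function.Surjective r := by
                  constructor
                  · intro h i
                    have : i ∈ Finset.image r univ := by rw [h]; exact Finset.mem_univ i
                    simpa using this
                  · intro h
                    ext i
                    simpa using h i
                simp only [Finset.compl_eq_empty_iff]
                exact if_congr hiff rfl rfl
      _ = ∑ r ∈ (univ : Finset (Fin n → Fin n)).filter (fun r => Function.Surjective r),
            A (fun i => v (r i)) := by
          simp only [ite_smul, one_smul, zero_smul, Finset.sum_filter]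
      _ = ∑ _σ ∈ (univ : Finset (Equiv.Perm (Fin n))), A v := by
          refine Finset.sum_bij
            (fun r hr => Equiv.ofBijective r
              (Finite.surjective_iff_bijective.mp (Finset.mem_filter.mp hr).2))
            (fun r hr => Finset.mem_univ _) ?_ ?_ ?_
          · intro r hr r' hr' h
            funext i
            exact congrArg (fun e => e i) (congrArg (fun (e : Equiv.Perm (Fin n)) => ⇑e) h)
          · intro σ _
            refine ⟨⇑σ, ?_, ?_⟩
            · simp [Finset.mem_filter, σ.surjective]
            · ext i; rfl
          · intro r hr
            exact hsym (Equiv.ofBijective r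
              (Finite.surjective_iff_bijective.mp (Finset.mem_filter.mp hr).2)) v
      _ = (n.factorial : ℤ) • A v := by
          rw [Finset.sum_const, Finset.card_univ, Fintype.card_perm, Fintype.card_fin]
          simp
  have : (n.factorial • A v : S) = n.factorial • (0 : S) := by
    rw [smul_zero]
    rw [← key]
    simp
  exact hinj this

theorem stmt2 {G S : Type*} [AddCommSemigroup G] [AddCommGroup S] {n : ℕ} (hn : 0 < n)
    (hinj : Function.Injective (fun s : S => n.factorial • s))
    (A : (Fin n → G) → S) (hadd : NAdditive A) (hsym : IsSymm' A)
    (hdiag : ∀ x : G, A (fun _ => x) = 0) :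
    ∀ v : Fin n → G, A v = 0 := by
  classical
  set A' : (Fin n → AdjZero G) → S :=
    fun y => if h : ∀ i, y i ≠ 0 then A (fun i => unadj (y i) (h i)) else 0 with hA'
  have hA'pos : ∀ (y : Fin n → AdjZero G) (h : ∀ i, y i ≠ 0),
      A' y = A (fun i => unadj (y i) (h i)) := by
    intro y h
    rw [hA']
    exact dif_pos h
  have hA'neg : ∀ (y : Fin n → AdjZero G), ¬(∀ i, y i ≠ 0) → A' y = 0 := by
    intro y h
    rw [hA']
    exact dif_neg h
  -- A' is n-additive
  have hadd' : NAdditive A' := by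
    intro i y u w
    by_cases hu : u = 0
    · subst hu
      rw [zero_add]
      have h0 : A' (Function.update y i 0) = 0 := by
        apply hA'neg
        intro h
        exact h i (by simp)
      rw [h0, zero_add]
    by_cases hw : w = 0
    · subst hw
      rw [add_zero]
      have h0 : A' (Function.update y i 0) = 0 := by
        apply hA'neg
        intro h
        exact h i (by simp)
      rw [h0, add_zero]
    obtain ⟨a, rfl⟩ := exists_adj hu
    obtain ⟨b, rfl⟩ := exists_adj hw
    by_cases hy : ∀ j, j ≠ i → y j ≠ 0
    · have hcond : ∀ (c : G) (j : Fin n), Function.update y i (adj c) j ≠ 0 := by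
        intro c j
        rcases eq_or_ne j i with rfl | hj
        · simp [adj_ne_zero]
        · rw [Function.update_of_ne hj]
          exact hy j hj
      have hab : adj a + adj b = adj (a + b) := (adj_add a b).symm
      let x : Fin n → G := fun j => unadj (Function.update y i (adj a) j) (hcond a j)
      have hupd : ∀ c : G, (fun j => unadj (Function.update y i (adj c) j) (hcond c j))
          = Function.update x i c := by
        intro c
        funext j
        rcases eq_or_ne j i with rfl | hj
        · have h1 : Function.update x j c j = c := Function.update_self j c x
          rw [h1]
          exact unadj_congr (Function.update_self j (adj c) y) _ (adj_ne_zero c)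
        · have h2 : Function.update x i c j = x j := Function.update_of_ne hj c x
          rw [h2]
          exact unadj_congr (by rw [Function.update_of_ne hj, Function.update_of_ne hj]) _ _
      have e : ∀ c : G, A' (Function.update y i (adj c)) = A (Function.update x i c) :=
        fun c => (hA'pos _ (hcond c)).trans (congrArg A (hupd c))
      rw [hab, e (a + b), e a, e b]
      exact hadd i x a b
    · push_neg at hy
      obtain ⟨j, hji, hj0⟩ := hy
      have hbad : ∀ c : G, A' (Function.update y i (adj c)) = 0 := by
        intro c
        apply hA'neg
        intro h
        exact (h j) (by rwa [Function.update_of_ne hji])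
      have hbad2 : A' (Function.update y i (adj a + adj b)) = 0 := by
        apply hA'neg
        intro h
        exact (h j) (by rwa [Function.update_of_ne hji])
      rw [hbad2, hbad a, hbad b, add_zero]
  -- A' is symmetric
  have hsym' : IsSymm' A' := by
    intro σ y
    by_cases h : ∀ i, y i ≠ 0
    · have hσ : ∀ i, (y ∘ σ) i ≠ 0 := fun i => h (σ i)
      rw [hA'pos _ h, hA'pos _ hσ]
      have := hsym σ (fun i => unadj (y i) (h i))
      rw [← this]
      rfl
    · have hσ : ¬ ∀ i, (y ∘ σ) i ≠ 0 := by
        intro hc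
        apply h
        intro i
        have := hc (σ.symm i)
        simpa using this
      rw [hA'neg _ h, hA'neg _ hσ]
  -- A' vanishes on the diagonal
  have hdiag' : ∀ x : AdjZero G, A' (fun _ => x) = 0 := by
    intro x
    by_cases hx : x = 0
    · apply hA'neg
      intro h
      exact h ⟨0, hn⟩ (by simp [hx])
    · obtain ⟨g, rfl⟩ := exists_adj hx
      rw [hA'pos _ (fun _ => adj_ne_zero g)]
      simpa [unadj_adj] using hdiag g
  intro v
  have h := stmt2_monoid hinj A' hadd' hsym' hdiag' (fun i => adj (v i))
  rw [hA'pos _ (fun i => adj_ne_zero (v i))] at h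
  simpa [unadj_adj] using h
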